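/- Let g be a finite multi strategic game where each agent's preference ≺_a on outcomes is a strict partial order. Define BR_a(γ) at node n by BR^n_a(γ) = {s^n | s ∈ S_a ∧ ∀ s' ∈ S_a, ¬(seq(γ; s, n) ≺^{fct}_a seq(γ; s', n))}, and BR_a(γ) = ∏_n BR^n_a(γ). Then each BR^n_a(γ) is nonempty, BR_a is monotone (γ ⊆ δ implies BR^n_a(γ) ⊆ BR^n_a(δ)), and the resulting ndbr multi strategic game has an ndbr equilibrium. -/

import Mathlib

/-- The induced sequence of sets of outcomes of an nd strategy profile `σ`,
starting at node `n`. -/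
def seqOut {V A Oc : Type*} {S : V → A → Type*}
    (P : ∀ n : V, (∀ a, S n a) → Oc × V) (σ : ∀ n a, Set (S n a)) :
    ℕ → V → Set Oc
  | 0, n => (fun x => (P n x).1) '' {x | ∀ a, x a ∈ σ n a}
  | k + 1, n => ⋃ x ∈ {x : ∀ a, S n a | ∀ a, x a ∈ σ n a}, seqOut P σ k (P n x).2

/-- `X ≺^{set} Y`: every element of `X` is `≺`-below every element of `Y`. -/
def setPrec {E : Type*} (r : E → E → Prop) (X Y : Set E) : Prop :=
  ∀ x ∈ X, ∀ y ∈ Y, r x y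

/-- The nd profile `(γ ; s)`: agent `a` plays the pure strategy `s`
(singletons at each node), the other agents play `γ`. -/
def insPure {V A : Type*} [DecidableEq A] {S : V → A → Type*} (a : A)
    (s : ∀ n, S n a) (γ : ∀ n, ∀ b : {x : A // x ≠ a}, Set (S n b.1)) :
    ∀ n b, Set (S n b) :=
  fun n b => if h : b = a then cast (congrArg (fun x => Set (S n x)) h).symm ({s n} : Set (S n a))
    else γ n ⟨b, h⟩

/-- `BR^n_a(γ)`: local strategies `s^n` of strategies `s ∈ S_a` such that no
`s' ∈ S_a` satisfies `seq(γ;s,n) ≺^{fct}_a seq(γ;s',n)`. -/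
def BRn {V A Oc : Type*} [DecidableEq A] {S : V → A → Type*}
    (P : ∀ n : V, (∀ a, S n a) → Oc × V) (prec : A → Oc → Oc → Prop) (a : A)
    (γ : ∀ n, ∀ b : {x : A // x ≠ a}, Set (S n b.1)) (n : V) : Set (S n a) :=
  {t | ∃ s : ∀ m, S m a, s n = t ∧ ∀ s' : ∀ m, S m a,
    ¬ (∀ k, setPrec (prec a) (seqOut P (insPure a s γ) k n)
      (seqOut P (insPure a s' γ) k n))}

section Aux
variable {V A Oc : Type*} [DecidableEq A] {S : V → A → Type*}
variable (P : ∀ n : V, (∀ a, S n a) → Oc × V) (prec : A → Oc → Oc → Prop)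

lemma seqOut_mono {σ δ : ∀ n a, Set (S n a)} (h : ∀ n a, σ n a ⊆ δ n a) :
    ∀ k n, seqOut P σ k n ⊆ seqOut P δ k n := by
  intro k
  induction k with
  | zero => exact fun n => Set.image_mono (fun x hx a => h n a (hx a))
  | succ k ih =>
    intro n o ho
    simp only [seqOut, Set.mem_iUnion] at ho ⊢
    obtain ⟨y, hy, hm⟩ := ho
    exact ⟨y, fun a => h n a (hy a), ih _ hm⟩

lemma seqOut_nonempty [∀ n a, Nonempty (S n a)] {σ : ∀ n a, Set (S n a)}
    (h : ∀ n a, (σ n a).Nonempty) : ∀ k n, (seqOut P σ k n).Nonempty := by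
  intro k
  induction k with
  | zero =>
    intro n
    choose x hx using h n
    exact ⟨(P n x).1, x, hx, rfl⟩
  | succ k ih =>
    intro n
    choose x hx using h n
    obtain ⟨o, ho⟩ := ih (P n x).2
    exact ⟨o, Set.mem_biUnion hx ho⟩

lemma insPure_nonempty {a : A} (s : ∀ n, S n a)
    {γ : ∀ n, ∀ b : {x : A // x ≠ a}, Set (S n b.1)}
    (h : ∀ n b, (γ n b).Nonempty) : ∀ n b, (insPure a s γ n b).Nonempty := by
  intro n b
  unfold insPure
  split
  · rename_i hb; subst hb; exact ⟨s n, rfl⟩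
  · exact h n _

lemma insPure_mono {a : A} (s : ∀ n, S n a)
    {γ δ : ∀ n, ∀ b : {x : A // x ≠ a}, Set (S n b.1)}
    (h : ∀ n b, γ n b ⊆ δ n b) : ∀ n b, insPure a s γ n b ⊆ insPure a s δ n b := by
  intro n b
  unfold insPure
  split
  · exact subset_rfl
  · exact h n _

lemma BRn_mono (a : A)
    {γ δ : ∀ n, ∀ b : {x : A // x ≠ a}, Set (S n b.1)}
    (h : ∀ n b, γ n b ⊆ δ n b) (n : V) : BRn P prec a γ n ⊆ BRn P prec a δ n := by
  rintro t ⟨s, hsn, hs⟩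
  refine ⟨s, hsn, fun s' hc => hs s' fun k x hx y hy => ?_⟩
  exact hc k x (seqOut_mono P (insPure_mono s h) k n hx) y
    (seqOut_mono P (insPure_mono s' h) k n hy)

lemma BRn_nonempty [Finite V] [∀ n a, Nonempty (S n a)] [∀ n a, Finite (S n a)]
    (hirr : ∀ a oc, ¬ prec a oc oc) (htr : ∀ a, Transitive (prec a)) (a : A)
    {γ : ∀ n, ∀ b : {x : A // x ≠ a}, Set (S n b.1)}
    (hγ : ∀ n b, (γ n b).Nonempty) (n : V) : (BRn P prec a γ n).Nonempty := by
  let r : (∀ m, S m a) → (∀ m, S m a) → Prop := fun s s' =>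
    ∀ k, setPrec (prec a) (seqOut P (insPure a s γ) k n) (seqOut P (insPure a s' γ) k n)
  have hne : ∀ s k m, (seqOut P (insPure a s γ) k m).Nonempty :=
    fun s => seqOut_nonempty P (insPure_nonempty s hγ)
  have hirr' : IsIrrefl _ (Function.swap r) := by
    constructor
    intro s hs
    obtain ⟨o, ho⟩ := hne s 0 n
    exact hirr a o (hs 0 o ho o ho)
  have htr' : IsTrans _ (Function.swap r) := by
    constructor
    intro s1 s2 s3 h21 h32 k x hx z hz
    obtain ⟨y, hy⟩ := hne s2 k n
    exact htr a (h32 k x hx y hy) (h21 k y hy z hz)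
  have wf := Finite.wellFounded_of_trans_of_irrefl (Function.swap r)
  obtain ⟨s, -, hs⟩ := wf.has_min Set.univ ⟨Classical.arbitrary _, trivial⟩
  exact ⟨s n, s, rfl, fun s' => hs s' trivial⟩

end Aux

def BRprofile {V A Oc : Type*} [DecidableEq A] {S : V → A → Type*}
    (P : ∀ n : V, (∀ a, S n a) → Oc × V) (prec : A → Oc → Oc → Prop)
    (σ : ∀ n a, Set (S n a)) : ∀ n a, Set (S n a) :=
  fun n a => BRn P prec a (fun m b => σ m b.1) n

def iterBR {V A Oc : Type*} [DecidableEq A] {S : V → A → Type*}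
    (P : ∀ n : V, (∀ a, S n a) → Oc × V) (prec : A → Oc → Oc → Prop) :
    ℕ → ∀ n a, Set (S n a)
  | 0 => fun _ _ => Set.univ
  | k + 1 => BRprofile P prec (iterBR P prec k)

section Iter
variable {V A Oc : Type*} [DecidableEq A] [Finite V] [Nonempty A] [Finite A]
  {S : V → A → Type*} [∀ n a, Nonempty (S n a)] [∀ n a, Finite (S n a)]
  (P : ∀ n : V, (∀ a, S n a) → Oc × V) (prec : A → Oc → Oc → Prop)

lemma iterBR_nonempty (hirr : ∀ a oc, ¬ prec a oc oc) (htr : ∀ a, Transitive (prec a)) :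
    ∀ k n a, (iterBR P prec k n a).Nonempty := by
  intro k
  induction k with
  | zero => exact fun n a => Set.univ_nonempty
  | succ k ih =>
    exact fun n a => BRn_nonempty P prec hirr htr a (fun m b => ih m b.1) n

lemma iterBR_dec : ∀ k n a, iterBR P prec (k + 1) n a ⊆ iterBR P prec k n a := by
  intro k
  induction k with
  | zero => exact fun n a => Set.subset_univ _
  | succ k ih => exact fun n a => BRn_mono P prec a (fun m b => ih m b.1) n

lemma iterBR_antitone : ∀ i j, i ≤ j → ∀ n a, iterBR P prec j n a ⊆ iterBR P prec i n a := by
  intro i j hij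
  induction hij with
  | refl => exact fun n a => subset_rfl
  | step h ih => exact fun n a => (iterBR_dec P prec _ n a).trans (ih n a)

end Iter


theorem stmt18 {V A Oc : Type*} [DecidableEq A] [Nonempty V] [Finite V]
    [Nonempty A] [Finite A] {S : V → A → Type*}
    [∀ n a, Nonempty (S n a)] [∀ n a, Finite (S n a)]
    (P : ∀ n : V, (∀ a, S n a) → Oc × V) (prec : A → Oc → Oc → Prop)
    (hirr : ∀ a oc, ¬ prec a oc oc) (htr : ∀ a, Transitive (prec a)) :
    (∀ (a : A) (γ : ∀ n, ∀ b : {x : A // x ≠ a}, Set (S n b.1)),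
      (∀ n b, (γ n b).Nonempty) → ∀ n, (BRn P prec a γ n).Nonempty) ∧
    (∀ (a : A) (γ δ : ∀ n, ∀ b : {x : A // x ≠ a}, Set (S n b.1)),
      (∀ n b, (γ n b).Nonempty) → (∀ n b, (δ n b).Nonempty) →
      (∀ n b, γ n b ⊆ δ n b) → ∀ n, BRn P prec a γ n ⊆ BRn P prec a δ n) ∧
    ∃ σ : ∀ n a, Set (S n a), (∀ n a, (σ n a).Nonempty) ∧
      ∀ (a : A) (n : V), σ n a ⊆ BRn P prec a (fun n b => σ n b.1) n := by
  refine ⟨fun a γ hγ n => BRn_nonempty P prec hirr htr a hγ n,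
          fun a γ δ _ _ h n => BRn_mono P prec a h n, ?_⟩
  obtain ⟨i, j, hlt, heq⟩ : ∃ i j, i < j ∧ iterBR P prec i = iterBR P prec j := by
    obtain ⟨i, j, hne, he⟩ := Finite.exists_ne_map_eq_of_infinite (iterBR P prec)
    rcases Nat.lt_or_gt_of_ne hne with h | h
    · exact ⟨i, j, h, he⟩
    · exact ⟨j, i, h, he.symm⟩
  refine ⟨iterBR P prec i, iterBR_nonempty P prec hirr htr i, fun a n x hx => ?_⟩
  have hx' : x ∈ iterBR P prec (i + 1) n a := by
    have h1 : x ∈ iterBR P prec j n a := by rw [← heq]; exact hx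
    exact iterBR_antitone P prec (i + 1) j hlt n a h1
  exact hx'
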